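/- Extended proofs are conservative: if the formula (¬A₁ ∨ β₁) ∧ (¬β₁ ∨ A₁) ∧ ... ∧ (¬A_h ∨ β_h) ∧ (¬β_h ∨ A_h) → α is valid, where A₁,...,A_h are distinct extension variables with A₁ not occurring in β₁ or α, ..., A_h not occurring in β₁,...,β_h or α, then α itself is valid. -/
import Mathlib


/-- Formulae of the calculus of structures in negation normal form. -/
inductive Formula : Type
  | top : Formula
  | bot : Formula
  | atom : ℕ → Formula
  | natom : ℕ → Formula
  | or : Formula → Formula → Formula
  | and : Formula → Formula → Formula
deriving DecidableEq

/-- Boolean evaluation of a formula under an assignment. -/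
def Formula.eval (v : ℕ → Bool) : Formula → Bool
  | .top => true
  | .bot => false
  | .atom n => v n
  | .natom n => !(v n)
  | .or a b => a.eval v || b.eval v
  | .and a b => a.eval v && b.eval v

/-- Size of a formula: number of unit and atom occurrences. -/
def Formula.size : Formula → ℕ
  | .top => 1
  | .bot => 1
  | .atom _ => 1
  | .natom _ => 1
  | .or a b => a.size + b.size
  | .and a b => a.size + b.size

/-- De Morgan dual (negation in negation normal form). -/
def Formula.dual : Formula → Formula
  | .top => .bot
  | .bot => .top
  | .atom n => .natom n
  | .natom n => .atom n
  | .or a b => .and a.dual b.dual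
  | .and a b => .or a.dual b.dual

/-- `occursVar a φ`: the variable `a` occurs (as `a` or `¬a`) in `φ`. -/
def occursVar (a : ℕ) : Formula → Prop
  | .top => False
  | .bot => False
  | .atom n => n = a
  | .natom n => n = a
  | .or x y => occursVar a x ∨ occursVar a y
  | .and x y => occursVar a x ∨ occursVar a y

/-- The conjunction of the extension axioms
`(¬A_i ∨ β_i) ∧ (¬β_i ∨ A_i)` for `i = 1, ..., h`. -/
def extAxioms (h : ℕ) (A : Fin h → ℕ) (β : Fin h → Formula) : Formula :=
  (List.ofFn fun i : Fin h =>
      Formula.and (.or (.natom (A i)) (β i)) (.or (β i).dual (.atom (A i)))).foldr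
    .and .top

lemma eval_congr (φ : Formula) (u w : ℕ → Bool)
    (h : ∀ a, occursVar a φ → u a = w a) : φ.eval u = φ.eval w := by
  induction φ with
  | top => rfl
  | bot => rfl
  | atom n => exact h n rfl
  | natom n => simp [Formula.eval, h n rfl]
  | or x y ihx ihy =>
      simp only [Formula.eval]
      rw [ihx (fun a ha => h a (Or.inl ha)), ihy (fun a ha => h a (Or.inr ha))]
  | and x y ihx ihy =>
      simp only [Formula.eval]
      rw [ihx (fun a ha => h a (Or.inl ha)), ihy (fun a ha => h a (Or.inr ha))]

lemma eval_dual (φ : Formula) (v : ℕ → Bool) : φ.dual.eval v = ! φ.eval v := by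
  induction φ <;> simp_all [Formula.dual, Formula.eval]

lemma foldr_and_eval (l : List Formula) (v : ℕ → Bool) :
    (l.foldr Formula.and Formula.top).eval v = true ↔ ∀ φ ∈ l, φ.eval v = true := by
  induction l with
  | nil => simp [Formula.eval]
  | cons x xs ih => simp [Formula.eval, ih]

/-- iterated substitution chain -/
def chain (h : ℕ) (A : Fin h → ℕ) (β : Fin h → Formula) (v : ℕ → Bool) : ℕ → (ℕ → Bool)
  | 0 => v
  | k+1 =>
      if hk : k < h then
        Function.update (chain h A β v k) (A ⟨k, hk⟩)
          ((β ⟨k, hk⟩).eval (chain h A β v k))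
      else chain h A β v k

lemma chain_stable (h : ℕ) (A : Fin h → ℕ) (β : Fin h → Formula) (v : ℕ → Bool)
    (n k m : ℕ) (hkm : k ≤ m) (hn : ∀ i : Fin h, k ≤ (i : ℕ) → n ≠ A i) :
    chain h A β v m n = chain h A β v k n := by
  induction m with
  | zero =>
      have : k = 0 := Nat.le_zero.mp hkm
      rw [this]
  | succ m ih =>
      rcases Nat.lt_or_ge k (m+1) with hlt | hge
      · have hm : k ≤ m := Nat.lt_succ_iff.mp hlt
        rw [show chain h A β v (m+1) = _ from rfl]
        simp only [chain]
        split
        · next hk =>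
            rw [Function.update_of_ne (hn ⟨m, hk⟩ hm)]
            exact ih hm
        · exact ih hm
      · have : k = m+1 := le_antisymm hkm hge
        rw [this]

/-- extended proofs are conservative. If the implication from the
extension axioms to `α` is valid, with each extension variable `A_i` fresh (not
occurring in `β_1, ..., β_i` nor in `α`, all `A_i` distinct), then `α` is valid. -/
theorem extension_conservative (h : ℕ) (A : Fin h → ℕ) (β : Fin h → Formula)
    (α : Formula)
    (hinj : Function.Injective A)
    (hα : ∀ i : Fin h, ¬ occursVar (A i) α)
    (hβ : ∀ i j : Fin h, j ≤ i → ¬ occursVar (A i) (β j))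
    (hvalid : ∀ v : ℕ → Bool, (extAxioms h A β).eval v = true → α.eval v = true) :
    ∀ v : ℕ → Bool, α.eval v = true := by
  intro v
  set w := chain h A β v h with hw
  have key : ∀ j : Fin h, w (A j) = (β j).eval w := by
    intro j
    have h1 : w (A j) = chain h A β v (j+1) (A j) := by
      apply chain_stable
      · exact j.2
      · intro i hi hne
        have hji : j = i := hinj hne
        have : (j:ℕ) = (i:ℕ) := by rw [hji]
        omega
    have h2 : chain h A β v (j+1) (A j) = (β j).eval (chain h A β v j) := by
      simp only [chain]
      rw [dif_pos j.2]
      have : (⟨(j:ℕ), j.2⟩ : Fin h) = j := Fin.ext rfl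
      rw [this, Function.update_self]
    have h3 : (β j).eval (chain h A β v j) = (β j).eval w := by
      apply eval_congr
      intro a ha
      symm
      apply chain_stable h A β v a j h j.2.le
      intro i hi hne
      subst hne
      exact hβ i j (by exact_mod_cast hi) ha
    rw [h1, h2, h3]
  have haxioms : (extAxioms h A β).eval w = true := by
    rw [extAxioms, foldr_and_eval]
    intro φ hφ
    rw [List.mem_ofFn] at hφ
    obtain ⟨i, rfl⟩ := hφ
    simp only [Formula.eval, eval_dual, key i]
    cases (β i).eval w <;> rfl
  have hαw : α.eval w = true := hvalid w haxioms
  have : α.eval v = α.eval w := by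
    apply eval_congr
    intro a ha
    symm
    apply chain_stable h A β v a 0 h (Nat.zero_le _)
    intro i _ hne
    subst hne
    exact hα i ha
  rw [this, hαw]
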